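/- Let N be a positive integer, T a positive real number, and for m = 0,…,N−1 define the discrete chirp ψ_m ∈ ℂ^N by ψ_m[n] = √(T/N)·exp(i·π/4)·exp(−i·π·(n−m)²/N) for n = 0,…,N−1. Then for all m₁, m₂ in {0,…,N−1}, Σ_{n=0}^{N−1} conj(ψ_{m₁}[n])·ψ_{m₂}[n] equals T if m₁ = m₂ and equals 0 otherwise. -/

import Mathlib

open Complex Real Finset

/-- The m-th discrete chirp of an N-chirp OCDM system with symbol duration T:
ψ_m[n] = √(T/N)·exp(i·π/4)·exp(−i·π·(n−m)²/N). -/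
noncomputable def discreteChirp (N : ℕ) (T : ℝ) (m n : Fin N) : ℂ :=
  (Real.sqrt (T / N) : ℂ) * Complex.exp ((Real.pi / 4) * Complex.I) *
    Complex.exp (-(Real.pi * Complex.I * (((n : ℕ) : ℤ) - ((m : ℕ) : ℤ)) ^ 2 / N))

theorem stmt16 (N : ℕ) (hN : 0 < N) (T : ℝ) (hT : 0 < T) (m₁ m₂ : Fin N) :
    ∑ n : Fin N, (starRingEnd ℂ) (discreteChirp N T m₁ n) * discreteChirp N T m₂ n =
      if m₁ = m₂ then (T : ℂ) else 0 := by
  have hNR : (0:ℝ) < N := by exact_mod_cast hN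
  have hNC : (N : ℂ) ≠ 0 := Nat.cast_ne_zero.mpr hN.ne'
  set a : ℤ := ((m₁ : ℕ) : ℤ) with ha
  set b : ℤ := ((m₂ : ℕ) : ℤ) with hb
  set d : ℤ := b - a with hd
  set z : ℂ := Complex.exp (2 * Real.pi * Complex.I * (d : ℂ) / N) with hz
  set c : ℂ := Complex.exp (-(Real.pi * Complex.I * (d : ℂ) * ((a : ℂ) + (b : ℂ)) / N)) with hc
  have hs : ((Real.sqrt (T / N) : ℝ) : ℂ) * ((Real.sqrt (T / N) : ℝ) : ℂ) = ((T / N : ℝ) : ℂ) := by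
    rw [← Complex.ofReal_mul, Real.mul_self_sqrt (by positivity)]
  have comb : ∀ (s x y u v : ℂ),
      s * Complex.exp x * Complex.exp y * (s * Complex.exp u * Complex.exp v)
        = s * s * Complex.exp (x + y + u + v) := by
    intro s x y u v
    rw [Complex.exp_add, Complex.exp_add, Complex.exp_add]; ring
  have key : ∀ n : Fin N, (starRingEnd ℂ) (discreteChirp N T m₁ n) * discreteChirp N T m₂ n
      = ((T / N : ℝ) : ℂ) * c * z ^ (n : ℕ) := by
    intro n
    have hzn : z ^ (n : ℕ) = Complex.exp (((n : ℕ) : ℂ) * (2 * Real.pi * Complex.I * (d : ℂ) / N)) := by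
      rw [hz, ← Complex.exp_nat_mul]
    rw [hzn, hc]
    simp only [discreteChirp, map_mul, ← Complex.exp_conj, Complex.conj_ofReal, map_div₀,
      map_neg, map_pow, map_sub, map_intCast, Complex.conj_I, map_natCast, map_ofNat]
    rw [comb, hs]
    conv_rhs => rw [mul_assoc, ← Complex.exp_add]
    congr 1
    simp only [hd, hb, ha]
    push_cast
    field_simp
    ring
  rw [Finset.sum_congr rfl (fun n _ => key n), ← Finset.mul_sum,
    Fin.sum_univ_eq_sum_range (fun k => z ^ k)]
  by_cases h : m₁ = m₂
  · subst h
    have hd0 : d = 0 := by simp [hd, ha, hb]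
    simp only [if_pos rfl]
    rw [hd0] at hz hc
    simp only [Int.cast_zero, mul_zero, zero_mul, zero_div, mul_zero, neg_zero,
      Complex.exp_zero] at hz hc
    simp only [hz, hc, one_pow, Finset.sum_const, Finset.card_range, nsmul_eq_mul, mul_one]
    push_cast
    field_simp
  · have hdne : d ≠ 0 := by
      simp only [hd, ha, hb, sub_ne_zero]
      exact fun hc => h (Fin.ext (by exact_mod_cast hc.symm))
    have hzN : z ^ N = 1 := by
      rw [hz, ← Complex.exp_nat_mul]
      have heq : (N : ℂ) * (2 * Real.pi * Complex.I * (d : ℂ) / N) = (d : ℂ) * (2 * Real.pi * Complex.I) := by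
        field_simp
      rw [heq]
      exact Complex.exp_int_mul_two_pi_mul_I d
    have hz1 : z ≠ 1 := by
      rw [hz]
      intro hcon
      rw [Complex.exp_eq_one_iff] at hcon
      obtain ⟨k, hk⟩ := hcon
      have h2 : (2 * (Real.pi : ℂ) * Complex.I) ≠ 0 := by
        simp [Real.pi_ne_zero, Complex.I_ne_zero]
      have hdk : (d : ℂ) = (k : ℂ) * N := by
        apply mul_left_cancel₀ h2
        field_simp at hk
        linear_combination (2 * (Real.pi : ℂ) * Complex.I) * hk
      have hdkz : d = k * N := by exact_mod_cast hdk
      have hdvd : (N : ℤ) ∣ d := ⟨k, by rw [hdkz]; ring⟩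
      have hle : (N : ℤ) ≤ |d| := Int.le_of_dvd (abs_pos.mpr hdne) ((dvd_abs _ _).mpr hdvd)
      have h1 := m₁.isLt
      have h2 := m₂.isLt
      have hlt : |d| < (N : ℤ) := by
        rw [hd, ha, hb, abs_lt]; omega
      exact absurd hle (not_le.mpr hlt)
    rw [geom_sum_eq hz1, hzN, sub_self, zero_div, mul_zero, if_neg h]
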